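/- Suppose that for every finite group G, every subgroup H ≤ G, and every finite generating multiset S of G with |S| ≤ [G:H], the multiset S is Nielsen equivalent to a multiset contained in a left-right transversal of H in G. Then the same conclusion holds for every group G, every finite index subgroup H ≤ G, and every finite generating multiset S of G with |S| ≤ [G:H]. -/

import Mathlib

open scoped Classical

section Defs

variable {G : Type*} [Group G]

/-- A single Nielsen move on a finite multiset of group elements: replace one
occurrence of `g` by `g⁻¹`, or by `h * g` or `g * h` where `h` is another
occurrence in the multiset. -/
def NielsenMove (S T : Multiset G) : Prop :=
  (∃ g ∈ S, T = g⁻¹ ::ₘ S.erase g) ∨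
    (∃ g ∈ S, ∃ h ∈ S.erase g, T = h * g ::ₘ S.erase g ∨ T = g * h ::ₘ S.erase g)

/-- Nielsen equivalence: one multiset is obtained from the other by a finite
sequence of Nielsen moves. -/
def NielsenEquiv (S T : Multiset G) : Prop :=
  Relation.ReflTransGen NielsenMove S T

/-- The elements of the multiset `S` lie in pairwise distinct left cosets of `H`. -/
def LeftDistinct (H : Subgroup G) (S : Multiset G) : Prop :=
  (S.map fun x => ((x : G) : G ⧸ H)).Nodup

/-- The elements of the multiset `S` lie in pairwise distinct right cosets of `H`
(using that `Hx = Hy ↔ x⁻¹H = y⁻¹H`). -/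
def RightDistinct (H : Subgroup G) (S : Multiset G) : Prop :=
  (S.map fun x => ((x⁻¹ : G) : G ⧸ H)).Nodup

/-- `T` is a left transversal of `H`: it contains exactly one element of each
left coset of `H`. -/
def IsLeftTransversal (H : Subgroup G) (T : Set G) : Prop :=
  ∀ g : G, ∃! t, t ∈ T ∧ ((t : G) : G ⧸ H) = ((g : G) : G ⧸ H)

/-- `T` is a right transversal of `H`: it contains exactly one element of each
right coset of `H` (using that `Hx = Hy ↔ x⁻¹H = y⁻¹H`). -/
def IsRightTransversal (H : Subgroup G) (T : Set G) : Prop :=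
  ∀ g : G, ∃! t, t ∈ T ∧ ((t⁻¹ : G) : G ⧸ H) = ((g⁻¹ : G) : G ⧸ H)

/-- The left coset `aH` as a set. -/
def lcoset (a : G) (H : Subgroup G) : Set G := {x | a⁻¹ * x ∈ H}

/-- The right coset `Ha` as a set. -/
def rcoset (H : Subgroup G) (a : G) : Set G := {x | x * a⁻¹ ∈ H}

/-- The double coset `HgH` as a set. -/
def dcoset (H : Subgroup G) (g : G) : Set G := {x | ∃ h₁ ∈ H, ∃ h₂ ∈ H, x = h₁ * g * h₂}

/-- `S` is left-right clean relative to `H`: `S ∖ H` is nonempty and its elements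
lie in pairwise distinct left cosets and pairwise distinct right cosets of `H`. -/
def LeftRightClean (H : Subgroup G) (S : Multiset G) : Prop :=
  (∃ x ∈ S, x ∉ H) ∧
    LeftDistinct H (S.filter fun x => x ∉ H) ∧
    RightDistinct H (S.filter fun x => x ∉ H)

end Defs

universe u

set_option linter.unusedSectionVars false


section Aux

variable {G : Type*} [Group G]

theorem NielsenEquiv.trans {S T U : Multiset G} (h₁ : NielsenEquiv S T)
    (h₂ : NielsenEquiv T U) : NielsenEquiv S U :=
  Relation.ReflTransGen.trans h₁ h₂

theorem NielsenEquiv.refl (S : Multiset G) : NielsenEquiv S S :=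
  Relation.ReflTransGen.refl

theorem NielsenMove.single {S T : Multiset G} (h : NielsenMove S T) : NielsenEquiv S T :=
  Relation.ReflTransGen.single h

/-- every Nielsen move is reversible -/
theorem NielsenMove.rev {S T : Multiset G} (h : NielsenMove S T) : NielsenEquiv T S := by
  rcases h with ⟨g, hg, rfl⟩ | ⟨g, hg, h, hh, rfl | rfl⟩
  · refine NielsenMove.single (Or.inl ⟨g⁻¹, Multiset.mem_cons_self _ _, ?_⟩)
    rw [Multiset.erase_cons_head, inv_inv, Multiset.cons_erase hg]
  · -- T = h*g ::ₘ E ; invert head, multiply right by h, invert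
    have e1 : NielsenEquiv (h * g ::ₘ S.erase g) ((h * g)⁻¹ ::ₘ S.erase g) :=
      NielsenMove.single (Or.inl ⟨h * g, Multiset.mem_cons_self _ _,
        by rw [Multiset.erase_cons_head]⟩)
    have e2 : NielsenEquiv ((h * g)⁻¹ ::ₘ S.erase g) ((h * g)⁻¹ * h ::ₘ S.erase g) :=
      NielsenMove.single (Or.inr ⟨(h * g)⁻¹, Multiset.mem_cons_self _ _, h,
        by rw [Multiset.erase_cons_head]; exact hh,
        Or.inr (by rw [Multiset.erase_cons_head])⟩)
    have h3 : (h * g)⁻¹ * h = g⁻¹ := by group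
    have e3 : NielsenEquiv (g⁻¹ ::ₘ S.erase g) (g ::ₘ S.erase g) :=
      NielsenMove.single (Or.inl ⟨g⁻¹, Multiset.mem_cons_self _ _,
        by rw [Multiset.erase_cons_head, inv_inv]⟩)
    have := (e1.trans e2).trans (h3 ▸ e3)
    rwa [Multiset.cons_erase hg] at this
  · have e1 : NielsenEquiv (g * h ::ₘ S.erase g) ((g * h)⁻¹ ::ₘ S.erase g) :=
      NielsenMove.single (Or.inl ⟨g * h, Multiset.mem_cons_self _ _,
        by rw [Multiset.erase_cons_head]⟩)
    have e2 : NielsenEquiv ((g * h)⁻¹ ::ₘ S.erase g) (h * (g * h)⁻¹ ::ₘ S.erase g) :=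
      NielsenMove.single (Or.inr ⟨(g * h)⁻¹, Multiset.mem_cons_self _ _, h,
        by rw [Multiset.erase_cons_head]; exact hh,
        Or.inl (by rw [Multiset.erase_cons_head])⟩)
    have h3 : h * (g * h)⁻¹ = g⁻¹ := by group
    have e3 : NielsenEquiv (g⁻¹ ::ₘ S.erase g) (g ::ₘ S.erase g) :=
      NielsenMove.single (Or.inl ⟨g⁻¹, Multiset.mem_cons_self _ _,
        by rw [Multiset.erase_cons_head, inv_inv]⟩)
    have := (e1.trans e2).trans (h3 ▸ e3)
    rwa [Multiset.cons_erase hg] at this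

theorem NielsenEquiv.symm {S T : Multiset G} (h : NielsenEquiv S T) : NielsenEquiv T S := by
  induction h with
  | refl => exact NielsenEquiv.refl S
  | tail _ h₂ ih => exact (h₂.rev).trans ih

theorem NielsenMove.card_eq {S T : Multiset G} (h : NielsenMove S T) :
    Multiset.card T = Multiset.card S := by
  rcases h with ⟨g, hg, rfl⟩ | ⟨g, hg, h, hh, rfl | rfl⟩ <;>
  · rw [Multiset.card_cons, Multiset.card_erase_of_mem hg]
    exact Nat.succ_pred_eq_of_pos (Multiset.card_pos_iff_exists_mem.2 ⟨g, hg⟩)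

theorem NielsenEquiv.card_eq {S T : Multiset G} (h : NielsenEquiv S T) :
    Multiset.card T = Multiset.card S := by
  induction h with
  | refl => rfl
  | tail _ h₂ ih => rw [h₂.card_eq, ih]

theorem NielsenMove.closure_le {S T : Multiset G} (h : NielsenMove S T) :
    Subgroup.closure {x : G | x ∈ S} ≤ Subgroup.closure {x : G | x ∈ T} := by
  rw [Subgroup.closure_le]
  intro x hx
  rcases h with ⟨g, hg, rfl⟩ | ⟨g, hg, h, hh, rfl | rfl⟩
  · by_cases hxg : x = g
    · subst hxg
      have : x⁻¹ ∈ {y : G | y ∈ x⁻¹ ::ₘ S.erase x} := Multiset.mem_cons_self _ _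
      simpa using inv_mem (Subgroup.subset_closure this)
    · exact Subgroup.subset_closure (Multiset.mem_cons_of_mem
        ((Multiset.mem_erase_of_ne hxg).2 hx))
  · by_cases hxg : x = g
    · subst hxg
      have h1 : h * x ∈ {y : G | y ∈ h * x ::ₘ S.erase x} := Multiset.mem_cons_self _ _
      have h2 : h ∈ {y : G | y ∈ h * x ::ₘ S.erase x} := Multiset.mem_cons_of_mem hh
      have := mul_mem (inv_mem (Subgroup.subset_closure h2)) (Subgroup.subset_closure h1)
      simpa [mul_assoc] using this
    · exact Subgroup.subset_closure (Multiset.mem_cons_of_mem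
        ((Multiset.mem_erase_of_ne hxg).2 hx))
  · by_cases hxg : x = g
    · subst hxg
      have h1 : x * h ∈ {y : G | y ∈ x * h ::ₘ S.erase x} := Multiset.mem_cons_self _ _
      have h2 : h ∈ {y : G | y ∈ x * h ::ₘ S.erase x} := Multiset.mem_cons_of_mem hh
      have := mul_mem (Subgroup.subset_closure h1) (inv_mem (Subgroup.subset_closure h2))
      simpa [mul_assoc] using this
    · exact Subgroup.subset_closure (Multiset.mem_cons_of_mem
        ((Multiset.mem_erase_of_ne hxg).2 hx))

theorem NielsenEquiv.closure_eq_top {S T : Multiset G} (h : NielsenEquiv S T)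
    (hS : Subgroup.closure {x : G | x ∈ S} = ⊤) :
    Subgroup.closure {x : G | x ∈ T} = ⊤ := by
  induction h with
  | refl => exact hS
  | tail _ h₂ ih => exact top_le_iff.1 (ih ▸ h₂.closure_le)

end Aux

section Aux2

variable {G : Type*} [Group G]

/-- Lemma A: multiply one element on the left by anything in the closure of the rest. -/
theorem nielsen_mul_left_closure {R : Multiset G} {w : G}
    (hw : w ∈ Subgroup.closure {x : G | x ∈ R}) :
    ∀ y : G, NielsenEquiv (y ::ₘ R) (w * y ::ₘ R) := by
  induction hw using Subgroup.closure_induction with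
  | mem x hx =>
    intro y
    exact NielsenMove.single (Or.inr ⟨y, Multiset.mem_cons_self _ _, x,
      by rw [Multiset.erase_cons_head]; exact hx,
      Or.inl (by rw [Multiset.erase_cons_head])⟩)
  | one => intro y; rw [one_mul]; exact NielsenEquiv.refl _
  | mul w₁ w₂ h₁ h₂ ih₁ ih₂ =>
    intro y
    have := (ih₂ y).trans (ih₁ (w₂ * y))
    rwa [← mul_assoc] at this
  | inv w hwmem ih =>
    intro y
    have := (ih (w⁻¹ * y)).symm
    rwa [← mul_assoc, mul_inv_cancel, one_mul] at this

theorem nielsen_mul_right_closure {R : Multiset G} {w : G}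
    (hw : w ∈ Subgroup.closure {x : G | x ∈ R}) :
    ∀ y : G, NielsenEquiv (y ::ₘ R) (y * w ::ₘ R) := by
  intro y
  have e1 : NielsenEquiv (y ::ₘ R) (y⁻¹ ::ₘ R) :=
    NielsenMove.single (Or.inl ⟨y, Multiset.mem_cons_self _ _,
      by rw [Multiset.erase_cons_head]⟩)
  have e2 := nielsen_mul_left_closure (inv_mem hw) y⁻¹
  have e3 : NielsenEquiv (w⁻¹ * y⁻¹ ::ₘ R) ((w⁻¹ * y⁻¹)⁻¹ ::ₘ R) :=
    NielsenMove.single (Or.inl ⟨w⁻¹ * y⁻¹, Multiset.mem_cons_self _ _,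
      by rw [Multiset.erase_cons_head]⟩)
  have := (e1.trans e2).trans e3
  rwa [mul_inv_rev, inv_inv, inv_inv] at this

theorem Multiset.erase_cons_of_mem {a g : G} {X : Multiset G} (hg : g ∈ X) :
    (a ::ₘ X).erase g = a ::ₘ X.erase g := by
  by_cases h : g = a
  · subst h; rw [Multiset.erase_cons_head, Multiset.cons_erase hg]
  · rw [Multiset.erase_cons_tail _ (Ne.symm h)]

theorem NielsenMove.cons_congr {X X' : Multiset G} (a : G) (h : NielsenMove X X') :
    NielsenMove (a ::ₘ X) (a ::ₘ X') := by
  rcases h with ⟨g, hg, rfl⟩ | ⟨g, hg, hel, hh, rfl | rfl⟩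
  · exact Or.inl ⟨g, Multiset.mem_cons_of_mem hg,
      by rw [Multiset.erase_cons_of_mem hg, Multiset.cons_swap]⟩
  · refine Or.inr ⟨g, Multiset.mem_cons_of_mem hg, hel, ?_, Or.inl ?_⟩
    · rw [Multiset.erase_cons_of_mem hg]; exact Multiset.mem_cons_of_mem hh
    · rw [Multiset.erase_cons_of_mem hg, Multiset.cons_swap]
  · refine Or.inr ⟨g, Multiset.mem_cons_of_mem hg, hel, ?_, Or.inr ?_⟩
    · rw [Multiset.erase_cons_of_mem hg]; exact Multiset.mem_cons_of_mem hh
    · rw [Multiset.erase_cons_of_mem hg, Multiset.cons_swap]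

theorem NielsenEquiv.cons_congr {X X' : Multiset G} (a : G) (h : NielsenEquiv X X') :
    NielsenEquiv (a ::ₘ X) (a ::ₘ X') := by
  induction h with
  | refl => exact NielsenEquiv.refl _
  | tail _ h₂ ih => exact ih.trans (NielsenMove.single (h₂.cons_congr a))

/-- Lemma B: replace all copies of `y` by `u * y`. -/
theorem nielsen_replicate {R : Multiset G} {u : G}
    (hu : u ∈ Subgroup.closure {x : G | x ∈ R}) (y : G) :
    ∀ m : ℕ, NielsenEquiv (Multiset.replicate m y + R) (Multiset.replicate m (u * y) + R) := by
  intro m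
  induction m with
  | zero => exact NielsenEquiv.refl _
  | succ m ih =>
    rw [Multiset.replicate_succ, Multiset.replicate_succ, Multiset.cons_add,
      Multiset.cons_add]
    have h1 : u ∈ Subgroup.closure {x : G | x ∈ Multiset.replicate m y + R} := by
      refine Subgroup.closure_mono ?_ hu
      intro x hx
      exact Multiset.mem_add.2 (Or.inr hx)
    exact (nielsen_mul_left_closure h1 y).trans (ih.cons_congr (u * y))

end Aux2

section Lift

variable {G Q : Type*} [Group G] [Group Q]

theorem nielsen_move_lift (π : G →* Q) (S : Multiset G) {T : Multiset Q}
    (h : NielsenMove (S.map π) T) :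
    ∃ S' : Multiset G, NielsenMove S S' ∧ S'.map π = T := by
  rcases h with ⟨gq, hg, rfl⟩ | ⟨gq, hg, hq, hh, rfl | rfl⟩
  · obtain ⟨g, hgS, rfl⟩ := Multiset.mem_map.1 hg
    have hmap : S.map π = π g ::ₘ (S.erase g).map π := by
      conv_lhs => rw [← Multiset.cons_erase hgS]
      rw [Multiset.map_cons]
    refine ⟨g⁻¹ ::ₘ S.erase g, Or.inl ⟨g, hgS, rfl⟩, ?_⟩
    rw [hmap, Multiset.erase_cons_head, Multiset.map_cons, map_inv]
  · obtain ⟨g, hgS, rfl⟩ := Multiset.mem_map.1 hg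
    have hmap : S.map π = π g ::ₘ (S.erase g).map π := by
      conv_lhs => rw [← Multiset.cons_erase hgS]
      rw [Multiset.map_cons]
    rw [hmap, Multiset.erase_cons_head] at hh ⊢
    obtain ⟨h, hhS, rfl⟩ := Multiset.mem_map.1 hh
    refine ⟨h * g ::ₘ S.erase g, Or.inr ⟨g, hgS, h, hhS, Or.inl rfl⟩, ?_⟩
    rw [Multiset.map_cons, map_mul]
  · obtain ⟨g, hgS, rfl⟩ := Multiset.mem_map.1 hg
    have hmap : S.map π = π g ::ₘ (S.erase g).map π := by
      conv_lhs => rw [← Multiset.cons_erase hgS]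
      rw [Multiset.map_cons]
    rw [hmap, Multiset.erase_cons_head] at hh ⊢
    obtain ⟨h, hhS, rfl⟩ := Multiset.mem_map.1 hh
    refine ⟨g * h ::ₘ S.erase g, Or.inr ⟨g, hgS, h, hhS, Or.inr rfl⟩, ?_⟩
    rw [Multiset.map_cons, map_mul]

theorem nielsen_equiv_lift (π : G →* Q) (S : Multiset G) {T : Multiset Q}
    (h : NielsenEquiv (S.map π) T) :
    ∃ S' : Multiset G, NielsenEquiv S S' ∧ S'.map π = T := by
  induction h with
  | refl => exact ⟨S, NielsenEquiv.refl S, rfl⟩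
  | tail _ h₂ ih =>
    obtain ⟨S₁, hS₁, rfl⟩ := ih
    obtain ⟨S₂, hmove, hmap⟩ := nielsen_move_lift π S₁ h₂
    exact ⟨S₂, hS₁.trans hmove.single, hmap⟩

end Lift

theorem nielsen_repair {G Q : Type*} [Group G] [Group Q] [Fintype Q] (π : G →* Q)
    (hπ : Function.Surjective π) (Tb : Set Q) :
    ∀ μ : ℕ, ∀ S : Multiset G,
      Subgroup.closure {x : G | x ∈ S} = ⊤ →
      (∀ x ∈ S, π x ∈ Tb) →
      S.toFinset.card ≤ Tb.toFinset.card →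
      S.toFinset.card - (S.toFinset.image π).card = μ →
      ∃ S' : Multiset G, NielsenEquiv S S' ∧ (∀ x ∈ S', π x ∈ Tb) ∧
        ∀ x ∈ S', ∀ y ∈ S', π x = π y → x = y := by
  intro μ
  induction μ using Nat.strong_induction_on with
  | _ μ ih =>
  intro S hcl himg hbig hμ
  by_cases hinj : Set.InjOn π ↑S.toFinset
  · refine ⟨S, Relation.ReflTransGen.refl, himg, fun a ha b hb hab => ?_⟩
    exact hinj (by simpa using Multiset.mem_toFinset.2 ha)
      (by simpa using Multiset.mem_toFinset.2 hb) hab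
  · have himlt : (S.toFinset.image π).card < S.toFinset.card :=
      lt_of_le_of_ne Finset.card_image_le (fun h => hinj (Finset.card_image_iff.1 h))
    rw [Set.InjOn] at hinj
    push_neg at hinj
    obtain ⟨x, hx, y, hy, hxy, hne⟩ := hinj
    have hxS : x ∈ S := Multiset.mem_toFinset.1 (by simpa using hx)
    have hyS : y ∈ S := Multiset.mem_toFinset.1 (by simpa using hy)
    set m := S.count y with hm
    set R := S.filter (fun a => ¬ (a = y)) with hR
    have hdecomp : Multiset.replicate m y + R = S := by
      rw [hm, hR, ← Multiset.filter_eq' S y]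
      exact Multiset.filter_add_not _ S
    -- fresh element of the transversal
    have hTim : (S.toFinset.image π).card < Tb.toFinset.card := lt_of_lt_of_le himlt hbig
    obtain ⟨c, hcT, hcim⟩ : ∃ c ∈ Tb.toFinset, c ∉ S.toFinset.image π := by
      by_contra hcon
      push_neg at hcon
      exact absurd (Finset.card_le_card hcon) (not_le.2 hTim)
    -- the closure of the image of R is everything
    have hclS : Subgroup.closure (π '' {a : G | a ∈ S}) = ⊤ := by
      rw [← MonoidHom.map_closure, hcl]
      exact Subgroup.map_top_of_surjective π hπ
    have hsub : π '' {a : G | a ∈ S} ⊆ ↑(Subgroup.closure (π '' {a : G | a ∈ R})) := by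
      rintro q ⟨a, haS, rfl⟩
      by_cases hay : a = y
      · subst hay
        have hxR : x ∈ R := by
          rw [hR]; exact Multiset.mem_filter.2 ⟨hxS, hne⟩
        have : π x ∈ π '' {b : G | b ∈ R} := ⟨x, hxR, rfl⟩
        rw [← hxy]
        exact Subgroup.subset_closure this
      · exact Subgroup.subset_closure ⟨a, Multiset.mem_filter.2 ⟨haS, hay⟩, rfl⟩
    have hclR : Subgroup.closure (π '' {a : G | a ∈ R}) = ⊤ := by
      have := (Subgroup.closure_le _).2 hsub
      rw [hclS] at this
      exact top_le_iff.1 this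
    -- find u in the closure of R hitting the right coset
    have hmem : c * (π y)⁻¹ ∈ Subgroup.map π (Subgroup.closure {a : G | a ∈ R}) := by
      rw [MonoidHom.map_closure, hclR]; trivial
    obtain ⟨u, huR, huπ⟩ := Subgroup.mem_map.1 hmem
    have hπuy : π (u * y) = c := by rw [map_mul, huπ, inv_mul_cancel_right]
    set S₃ := Multiset.replicate m (u * y) + R with hS₃
    have hNE₃ : NielsenEquiv S S₃ := by
      rw [← hdecomp]; exact nielsen_replicate huR y m
    have hcl₃ : Subgroup.closure {a : G | a ∈ S₃} = ⊤ := hNE₃.closure_eq_top hcl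
    have hm0 : m ≠ 0 := (Multiset.count_pos.2 hyS).ne'
    have himg₃ : ∀ a ∈ S₃, π a ∈ Tb := by
      intro a ha
      rcases Multiset.mem_add.1 ha with h | h
      · rw [Multiset.eq_of_mem_replicate h, hπuy]
        exact Set.mem_toFinset.1 hcT
      · exact himg a (Multiset.mem_of_mem_filter h)
    have hV₃ : S₃.toFinset = insert (u * y) (S.toFinset.erase y) := by
      ext a
      simp only [Multiset.mem_toFinset, hS₃, Multiset.mem_add, Multiset.mem_replicate,
        Multiset.mem_filter, Finset.mem_insert, Finset.mem_erase, hR]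
      constructor
      · rintro (⟨-, rfl⟩ | ⟨haS, hay⟩)
        · exact Or.inl rfl
        · exact Or.inr ⟨hay, haS⟩
      · rintro (rfl | ⟨hay, haS⟩)
        · exact Or.inl ⟨hm0, rfl⟩
        · exact Or.inr ⟨haS, hay⟩
    have herase_im : (S.toFinset.erase y).image π = S.toFinset.image π := by
      apply Finset.Subset.antisymm (Finset.image_subset_image (Finset.erase_subset _ _))
      intro q hq
      obtain ⟨a, ha, rfl⟩ := Finset.mem_image.1 hq
      by_cases hay : a = y
      · subst hay
        refine Finset.mem_image.2 ⟨x, Finset.mem_erase.2 ⟨hne, by simpa using hx⟩, hxy⟩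
      · exact Finset.mem_image.2 ⟨a, Finset.mem_erase.2 ⟨hay, ha⟩, rfl⟩
    have hcnotin : c ∉ (S.toFinset.erase y).image π := by rw [herase_im]; exact hcim
    have hc2 : (S₃.toFinset.image π).card = (S.toFinset.image π).card + 1 := by
      rw [hV₃, Finset.image_insert, hπuy, Finset.card_insert_of_notMem hcnotin, herase_im]
    have hyV : y ∈ S.toFinset := Multiset.mem_toFinset.2 hyS
    have hc1 : S₃.toFinset.card ≤ S.toFinset.card := by
      rw [hV₃]
      calc (insert (u * y) (S.toFinset.erase y)).card
          ≤ (S.toFinset.erase y).card + 1 := Finset.card_insert_le _ _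
        _ = S.toFinset.card - 1 + 1 := by rw [Finset.card_erase_of_mem hyV]
        _ ≤ S.toFinset.card := by
            have := Finset.card_pos.2 ⟨y, hyV⟩
            omega
    obtain ⟨S₄, hNE₄, h₄a, h₄b⟩ := ih (S₃.toFinset.card - (S₃.toFinset.image π).card)
      (by omega) S₃ hcl₃ himg₃ (le_trans hc1 hbig) rfl
    exact ⟨S₄, hNE₃.trans hNE₄, h₄a, h₄b⟩


/-- if for every finite group, every subgroup `H` and every
generating multiset `S` with `|S| ≤ [G:H]`, `S` is Nielsen equivalent to a
multiset contained in a left-right transversal of `H`, then the same holds for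
every group with a finite-index subgroup. -/
theorem stmt8
    (hfin : ∀ (G : Type u) [Group G] [Finite G] (H : Subgroup G) (S : Multiset G),
      Subgroup.closure {x : G | x ∈ S} = ⊤ → S.card ≤ H.index →
      ∃ S' : Multiset G, NielsenEquiv S S' ∧
        ∃ T : Set G, IsLeftTransversal H T ∧ IsRightTransversal H T ∧ ∀ x ∈ S', x ∈ T) :
    ∀ (G : Type u) [Group G] (H : Subgroup G), H.FiniteIndex →
      ∀ S : Multiset G, Subgroup.closure {x : G | x ∈ S} = ⊤ → S.card ≤ H.index →
      ∃ S' : Multiset G, NielsenEquiv S S' ∧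
        ∃ T : Set G, IsLeftTransversal H T ∧ IsRightTransversal H T ∧ ∀ x ∈ S', x ∈ T := by
  intro G _ H hHfi S hgen hcard
  haveI := hHfi
  set N := H.normalCore with hN
  haveI : N.FiniteIndex := H.finiteIndex_normalCore
  haveI : Finite (G ⧸ N) := Subgroup.finite_quotient_of_finiteIndex
  haveI : Fintype (G ⧸ N) := Fintype.ofFinite _
  set π : G →* G ⧸ N := QuotientGroup.mk' N with hπdef
  have hπ : Function.Surjective π := QuotientGroup.mk'_surjective N
  have hNle : N ≤ H := H.normalCore_le
  set Hb : Subgroup (G ⧸ N) := H.map π with hHb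
  have hker : π.ker = N := QuotientGroup.ker_mk' N
  have hidx : Hb.index = H.index :=
    H.index_map_eq hπ (by rw [QuotientGroup.ker_mk']; exact hNle)
  have himgset : {x : G ⧸ N | x ∈ S.map π} = π '' {x : G | x ∈ S} := by
    ext q
    simp [Multiset.mem_map, Set.mem_image]
  have hgenQ : Subgroup.closure {x : G ⧸ N | x ∈ S.map π} = ⊤ := by
    rw [himgset, ← MonoidHom.map_closure, hgen]
    exact Subgroup.map_top_of_surjective π hπ
  have hcardQ : (S.map π).card ≤ Hb.index := by
    rw [Multiset.card_map, hidx]; exact hcard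
  obtain ⟨Sb', hNEb, Tb, hTl, hTr, hsubT⟩ := hfin (G ⧸ N) Hb (S.map π) hgenQ hcardQ
  obtain ⟨S₁, hNE₁, hmap₁⟩ := nielsen_equiv_lift π S hNEb
  have himg₁ : ∀ x ∈ S₁, π x ∈ Tb := fun x hx =>
    hsubT _ (hmap₁ ▸ Multiset.mem_map_of_mem π hx)
  have hcl₁ : Subgroup.closure {x : G | x ∈ S₁} = ⊤ := hNE₁.closure_eq_top hgen
  -- the transversal has at least `Hb.index` elements
  have hTcard : Hb.index ≤ Tb.toFinset.card := by
    choose f hf using fun q : (G ⧸ N) ⧸ Hb => (hTl (Quotient.out q)).exists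
    have hfq : ∀ q, ((f q : G ⧸ N) : (G ⧸ N) ⧸ Hb) = q := by
      intro q
      exact (hf q).2.trans (Quotient.out_eq' q)
    have hinj : Function.Injective f := by
      intro a b hab
      rw [← hfq a, ← hfq b, hab]
    calc Hb.index = Nat.card ((G ⧸ N) ⧸ Hb) := Subgroup.index_eq_card Hb
      _ = Finset.univ.card := by rw [Nat.card_eq_fintype_card, Finset.card_univ]
      _ ≤ Tb.toFinset.card := Finset.card_le_card_of_injOn f
          (fun a _ => Set.mem_toFinset.2 (hf a).1) (Function.Injective.injOn hinj)
  have hbig₁ : S₁.toFinset.card ≤ Tb.toFinset.card := by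
    calc S₁.toFinset.card ≤ Multiset.card S₁ := Multiset.toFinset_card_le _
      _ = Multiset.card S := hNE₁.card_eq
      _ ≤ H.index := hcard
      _ = Hb.index := hidx.symm
      _ ≤ Tb.toFinset.card := hTcard
  obtain ⟨S₂, hNE₂, himg₂, hinj₂⟩ :=
    nielsen_repair π hπ Tb _ S₁ hcl₁ himg₁ hbig₁ rfl
  refine ⟨S₂, hNE₁.trans hNE₂, ?_⟩
  -- choose lifts of the transversal
  set ℓ : G ⧸ N → G := fun q =>
    if h : ∃ x, x ∈ S₂ ∧ π x = q then h.choose else (hπ q).choose with hℓdef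
  have hℓπ : ∀ q, π (ℓ q) = q := by
    intro q
    by_cases h : ∃ x, x ∈ S₂ ∧ π x = q
    · simp only [hℓdef, dif_pos h]; exact h.choose_spec.2
    · simp only [hℓdef, dif_neg h]; exact (hπ q).choose_spec
  have hℓS : ∀ x ∈ S₂, ℓ (π x) = x := by
    intro x hx
    have h : ∃ x', x' ∈ S₂ ∧ π x' = π x := ⟨x, hx, rfl⟩
    simp only [hℓdef, dif_pos h]
    exact hinj₂ _ h.choose_spec.1 x hx h.choose_spec.2
  -- key coset correspondence
  have hcos : ∀ a b : G, ((a : G ⧸ H) = (b : G ⧸ H)) ↔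
      ((π a : (G ⧸ N) ⧸ Hb) = (π b : (G ⧸ N) ⧸ Hb)) := by
    intro a b
    rw [QuotientGroup.eq, QuotientGroup.eq]
    constructor
    · intro h
      have : π (a⁻¹ * b) ∈ Hb := Subgroup.mem_map_of_mem π h
      simpa [map_mul, map_inv] using this
    · intro h
      have hmem : π (a⁻¹ * b) ∈ Hb := by simpa [map_mul, map_inv] using h
      obtain ⟨h₀, hh₀, heq⟩ := Subgroup.mem_map.1 hmem
      have hkmem : h₀⁻¹ * (a⁻¹ * b) ∈ π.ker := by
        rw [MonoidHom.mem_ker, map_mul, map_inv, heq, inv_mul_cancel]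
      rw [hker] at hkmem
      have hH : h₀⁻¹ * (a⁻¹ * b) ∈ H := hNle hkmem
      have := H.mul_mem hh₀ hH
      simpa [mul_inv_cancel_left] using this
  refine ⟨ℓ '' Tb, ?_, ?_, fun x hx => ⟨π x, himg₂ x hx, hℓS x hx⟩⟩
  · -- left transversal
    intro g
    obtain ⟨t, ⟨htT, htc⟩, huniq⟩ := hTl (π g)
    refine ⟨ℓ t, ⟨⟨t, htT, rfl⟩, ?_⟩, ?_⟩
    · rw [hcos, hℓπ]; exact htc
    · rintro t' ⟨⟨s, hsT, rfl⟩, hc⟩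
      have hs : ((s : G ⧸ N) : (G ⧸ N) ⧸ Hb) = ((π g : G ⧸ N) : (G ⧸ N) ⧸ Hb) := by
        rw [← hℓπ s]; exact (hcos _ _).1 hc
      rw [huniq s ⟨hsT, hs⟩]
  · -- right transversal
    intro g
    obtain ⟨t, ⟨htT, htc⟩, huniq⟩ := hTr (π g)
    refine ⟨ℓ t, ⟨⟨t, htT, rfl⟩, ?_⟩, ?_⟩
    · rw [hcos ((ℓ t)⁻¹) (g⁻¹), map_inv, map_inv, hℓπ]; exact htc
    · rintro t' ⟨⟨s, hsT, rfl⟩, hc⟩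
      have hs : (((s : G ⧸ N)⁻¹ : G ⧸ N) : (G ⧸ N) ⧸ Hb) =
          (((π g)⁻¹ : G ⧸ N) : (G ⧸ N) ⧸ Hb) := by
        rw [← hℓπ s, ← map_inv, ← map_inv]
        exact (hcos _ _).1 hc
      rw [huniq s ⟨hsT, hs⟩]
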